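/- arXiv:2212.06337 — 2 statements merged into one kernel-verified Lean document; each statement's English description precedes it below -/
import Mathlib

section
/- Let $|q|<1$, $p \geq 1$ an integer, and for $n \geq 1$ define the sums $S_n = \sum_{k=-n}^{n} \frac{(-1)^k q^{(p+1/2)k^2 - k/2}}{(q;q)_{n-k}(q;q)_{n+k}}$ and $T_n = \sum_{k=-n+1}^{n} \frac{(-1)^k q^{(p+1/2)k^2 - k/2}}{(q;q)_{n-k}(q;q)_{n+k-1}}$. Then $(1-q^n) S_n = T_n$. -/
/-- The q-Pochhammer symbol `(q; q)_n`. -/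
def qPoch (q : ℂ) (n : ℕ) : ℂ := ∏ j ∈ Finset.range n, (1 - q ^ (j + 1))

lemma one_sub_pow_ne (q : ℂ) (hq : ‖q‖ < 1) (j : ℕ) : (1 : ℂ) - q ^ (j + 1) ≠ 0 := by
  intro h
  have h1 : q ^ (j + 1) = 1 := by linear_combination -h
  have h2 : ‖q ^ (j + 1)‖ < 1 := by
    rw [norm_pow]
    exact pow_lt_one₀ (norm_nonneg q) hq (Nat.succ_ne_zero j)
  rw [h1] at h2; simp at h2

lemma qPoch_ne_zero (q : ℂ) (hq : ‖q‖ < 1) (m : ℕ) : qPoch q m ≠ 0 :=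
  Finset.prod_ne_zero_iff.mpr fun j _ => one_sub_pow_ne q hq j

lemma qPoch_succ (q : ℂ) (m : ℕ) : qPoch q (m + 1) = qPoch q m * (1 - q ^ (m + 1)) :=
  Finset.prod_range_succ _ _

lemma exp_neg (p : ℕ) (k : ℤ) :
    ((2 * (p:ℤ) + 1) * (-k) ^ 2 - (-k)) / 2 = ((2 * (p:ℤ) + 1) * k ^ 2 - k) / 2 + k := by
  have heven : (2:ℤ) ∣ ((2 * (p:ℤ) + 1) * k ^ 2 - k) := by
    obtain ⟨m, hm⟩ := Int.even_mul_succ_self (k - 1)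
    exact ⟨(p:ℤ) * k ^ 2 + m, by linear_combination hm⟩
  have hsq : (-k) ^ 2 = k ^ 2 := by ring
  rw [hsq]
  generalize (2 * (p:ℤ) + 1) * k ^ 2 = c at heven ⊢
  omega

lemma exp_pos (p : ℕ) (hp : 1 ≤ p) (k : ℤ) (hk : k ≠ 0) :
    1 ≤ ((2 * (p:ℤ) + 1) * k ^ 2 - k) / 2 := by
  have h1 : 1 ≤ k ^ 2 := by rcases hk.lt_or_gt with h | h <;> nlinarith
  have h2 : k ≤ k ^ 2 := by nlinarith
  have hp' : (1:ℤ) ≤ (p:ℤ) := by exact_mod_cast hp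
  have h3 : 2 ≤ (2 * (p:ℤ) + 1) * k ^ 2 - k := by nlinarith
  generalize (2 * (p:ℤ) + 1) * k ^ 2 - k = c at h3 ⊢
  omega

theorem auxiliary1 (q : ℂ) (hq : ‖q‖ < 1) (p : ℕ) (hp : 1 ≤ p) (n : ℕ) (hn : 1 ≤ n) :
    (1 - q ^ n) * ∑ k ∈ Finset.Icc (-(n : ℤ)) n,
        (-1 : ℂ) ^ k * q ^ (((2 * p + 1) * k ^ 2 - k) / 2) /
          (qPoch q ((n : ℤ) - k).toNat * qPoch q ((n : ℤ) + k).toNat) =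
      ∑ k ∈ Finset.Icc (-(n : ℤ) + 1) n,
        (-1 : ℂ) ^ k * q ^ (((2 * p + 1) * k ^ 2 - k) / 2) /
          (qPoch q ((n : ℤ) - k).toNat * qPoch q ((n : ℤ) + k - 1).toNat) := by
  rcases eq_or_ne q 0 with rfl | hq0
  · -- q = 0 : both sides equal 1
    have hP0 : ∀ m : ℕ, qPoch 0 m = 1 := by
      intro m; simp [qPoch]
    have hz : ∀ k : ℤ, k ≠ 0 → ((0:ℂ)) ^ (((2 * (p:ℤ) + 1) * k ^ 2 - k) / 2) = 0 := by
      intro k hk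
      exact zero_zpow _ (by have := exp_pos p hp k hk; omega)
    rw [Finset.sum_eq_single_of_mem (0:ℤ)
        (by simp only [Finset.mem_Icc]; omega)
        (fun k _ hk => by rw [hz k hk]; simp),
      Finset.sum_eq_single_of_mem (0:ℤ)
        (by simp only [Finset.mem_Icc]; omega)
        (fun k _ hk => by rw [hz k hk]; simp)]
    simp [hP0, zero_pow (by omega : n ≠ 0)]
  · -- q ≠ 0
    have hP := qPoch_ne_zero q hq
    -- the antisymmetric sum vanishes
    have hzero : ∑ k ∈ Finset.Icc (-(n:ℤ)) n,
        (q ^ k - 1) * ((-1:ℂ) ^ k * q ^ (((2 * (p:ℤ) + 1) * k ^ 2 - k) / 2)) /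
          (qPoch q ((n:ℤ) - k).toNat * qPoch q ((n:ℤ) + k).toNat) = 0 := by
      set f : ℤ → ℂ := fun k =>
        (q ^ k - 1) * ((-1:ℂ) ^ k * q ^ (((2 * (p:ℤ) + 1) * k ^ 2 - k) / 2)) /
          (qPoch q ((n:ℤ) - k).toNat * qPoch q ((n:ℤ) + k).toNat) with hf
      have hanti : ∀ k : ℤ, f (-k) = - f k := by
        intro k
        simp only [hf]
        have h1 : ((n:ℤ) - -k).toNat = ((n:ℤ) + k).toNat := by
          rw [sub_neg_eq_add]
        have h2 : ((n:ℤ) + -k).toNat = ((n:ℤ) - k).toNat := by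
          rw [← sub_eq_add_neg]
        have h3 : (-1:ℂ) ^ (-k) = (-1:ℂ) ^ k := by
          rw [zpow_neg]
          refine inv_eq_of_mul_eq_one_left ?_
          rw [← zpow_add₀ (by norm_num : (-1:ℂ) ≠ 0),
            show k + k = 2 * k by ring, zpow_mul]
          norm_num
        have h4 : q ^ (((2 * (p:ℤ) + 1) * (-k) ^ 2 - (-k)) / 2)
            = q ^ (((2 * (p:ℤ) + 1) * k ^ 2 - k) / 2) * q ^ k := by
          rw [exp_neg, zpow_add₀ hq0]
        rw [h1, h2, h3, h4, zpow_neg]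
        have hqk : q ^ k ≠ 0 := zpow_ne_zero _ hq0
        have hd1 := hP ((n:ℤ) - k).toNat
        have hd2 := hP ((n:ℤ) + k).toNat
        field_simp
        ring
      have h5 : ∑ k ∈ Finset.Icc (-(n:ℤ)) n, f k
          = ∑ k ∈ Finset.Icc (-(n:ℤ)) n, - f k := by
        refine Finset.sum_equiv (Equiv.neg ℤ) ?_ ?_
        · intro i; simp [Finset.mem_Icc]; omega
        · intro i _; simp only [Equiv.neg_apply]; rw [hanti i]; ring
      have h6 : (∑ k ∈ Finset.Icc (-(n:ℤ)) n, f k)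
          + ∑ k ∈ Finset.Icc (-(n:ℤ)) n, f k = 0 := by
        nth_rewrite 2 [h5]
        rw [Finset.sum_neg_distrib]
        exact add_neg_cancel _
      exact add_self_eq_zero.mp h6
    -- rewrite the RHS terms
    have hR : ∀ k ∈ Finset.Icc (-(n:ℤ) + 1) n,
        (-1:ℂ) ^ k * q ^ (((2 * (p:ℤ) + 1) * k ^ 2 - k) / 2) /
            (qPoch q ((n:ℤ) - k).toNat * qPoch q ((n:ℤ) + k - 1).toNat)
        = (1 - q ^ ((n:ℤ) + k)) *
            ((-1:ℂ) ^ k * q ^ (((2 * (p:ℤ) + 1) * k ^ 2 - k) / 2)) /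
            (qPoch q ((n:ℤ) - k).toNat * qPoch q ((n:ℤ) + k).toNat) := by
      intro k hk
      simp only [Finset.mem_Icc] at hk
      have hm : ((n:ℤ) + k).toNat = ((n:ℤ) + k - 1).toNat + 1 := by omega
      have hq' : q ^ ((n:ℤ) + k) = q ^ (((n:ℤ) + k - 1).toNat + 1) := by
        rw [← zpow_natCast]
        congr 1
        push_cast
        omega
      rw [hm, qPoch_succ, hq']
      have h1 := one_sub_pow_ne q hq (((n:ℤ) + k - 1).toNat)
      have h2 := hP ((n:ℤ) - k).toNat
      have h3 := hP (((n:ℤ) + k - 1).toNat)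
      rw [div_eq_div_iff (mul_ne_zero h2 h3)
        (mul_ne_zero h2 (mul_ne_zero h3 h1))]
      ring
    rw [Finset.sum_congr rfl hR]
    -- extend the RHS sum to the full interval
    have hIcc : Finset.Icc (-(n:ℤ)) n = insert (-(n:ℤ)) (Finset.Icc (-(n:ℤ) + 1) n) := by
      ext x; simp only [Finset.mem_Icc, Finset.mem_insert]; omega
    have hnot : (-(n:ℤ)) ∉ Finset.Icc (-(n:ℤ) + 1) n := by
      simp only [Finset.mem_Icc]; omega
    have hext : ∑ k ∈ Finset.Icc (-(n:ℤ) + 1) n,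
        (1 - q ^ ((n:ℤ) + k)) *
            ((-1:ℂ) ^ k * q ^ (((2 * (p:ℤ) + 1) * k ^ 2 - k) / 2)) /
            (qPoch q ((n:ℤ) - k).toNat * qPoch q ((n:ℤ) + k).toNat)
        = ∑ k ∈ Finset.Icc (-(n:ℤ)) n,
        (1 - q ^ ((n:ℤ) + k)) *
            ((-1:ℂ) ^ k * q ^ (((2 * (p:ℤ) + 1) * k ^ 2 - k) / 2)) /
            (qPoch q ((n:ℤ) - k).toNat * qPoch q ((n:ℤ) + k).toNat) := by
      rw [hIcc, Finset.sum_insert hnot]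
      have hz0 : (n:ℤ) + -(n:ℤ) = 0 := by ring
      rw [hz0, zpow_zero]
      simp
    rw [hext]
    rw [Finset.mul_sum, ← sub_eq_zero, ← Finset.sum_sub_distrib]
    have hterm : ∀ k ∈ Finset.Icc (-(n:ℤ)) n,
        (1 - q ^ n) * ((-1:ℂ) ^ k * q ^ (((2 * (p:ℤ) + 1) * k ^ 2 - k) / 2) /
            (qPoch q ((n:ℤ) - k).toNat * qPoch q ((n:ℤ) + k).toNat))
        - (1 - q ^ ((n:ℤ) + k)) *
            ((-1:ℂ) ^ k * q ^ (((2 * (p:ℤ) + 1) * k ^ 2 - k) / 2)) /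
            (qPoch q ((n:ℤ) - k).toNat * qPoch q ((n:ℤ) + k).toNat)
        = q ^ (n:ℤ) *
            ((q ^ k - 1) * ((-1:ℂ) ^ k * q ^ (((2 * (p:ℤ) + 1) * k ^ 2 - k) / 2)) /
            (qPoch q ((n:ℤ) - k).toNat * qPoch q ((n:ℤ) + k).toNat)) := by
      intro k _
      have hnk : q ^ ((n:ℤ) + k) = q ^ (n:ℤ) * q ^ k := zpow_add₀ hq0 _ _
      have hnn : q ^ (n:ℤ) = q ^ n := zpow_natCast q n
      rw [hnk, hnn]
      have h2 := hP ((n:ℤ) - k).toNat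
      have h3 := hP ((n:ℤ) + k).toNat
      field_simp
      ring
    rw [Finset.sum_congr rfl hterm, ← Finset.mul_sum, hzero, mul_zero]
end

section
/- Let $|q|<1$, $p \geq 1$ an integer, and for $n \geq 0$ define $S_n = \sum_{k=-n-1}^{n} \frac{(-1)^k q^{(p+1/2)k^2+(p-1/2)k}}{(q;q)_{n-k}(q;q)_{n+k+1}}$ and $T_n = \sum_{k=-n}^{n} \frac{(-1)^k q^{(p+1/2)k^2+(p+1/2)k}}{(q;q)_{n-k}(q;q)_{n+k}}$. Then $q^n S_n = T_n$. -/
namespace Aux2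

/-- exponent in S -/
def A (p : ℕ) (k : ℤ) : ℤ := ((2 * (p : ℤ) + 1) * k ^ 2 + (2 * (p : ℤ) - 1) * k) / 2
/-- exponent in T -/
def B (p : ℕ) (k : ℤ) : ℤ := ((2 * (p : ℤ) + 1) * k ^ 2 + (2 * (p : ℤ) + 1) * k) / 2

lemma A_two (p : ℕ) (k : ℤ) :
    2 * A p k = (2 * (p : ℤ) + 1) * k ^ 2 + (2 * (p : ℤ) - 1) * k := by
  obtain ⟨m, hm⟩ := Int.even_mul_succ_self k
  have h : (2 * (p : ℤ) + 1) * k ^ 2 + (2 * (p : ℤ) - 1) * k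
      = 2 * ((p : ℤ) * k ^ 2 + (p : ℤ) * k - k + m) := by linear_combination hm
  rw [A, h, Int.mul_ediv_cancel_left _ (by norm_num)]

lemma B_two (p : ℕ) (k : ℤ) :
    2 * B p k = (2 * (p : ℤ) + 1) * k ^ 2 + (2 * (p : ℤ) + 1) * k := by
  obtain ⟨m, hm⟩ := Int.even_mul_succ_self k
  have h : (2 * (p : ℤ) + 1) * k ^ 2 + (2 * (p : ℤ) + 1) * k
      = 2 * ((p : ℤ) * k ^ 2 + (p : ℤ) * k + m) := by linear_combination hm
  rw [B, h, Int.mul_ediv_cancel_left _ (by norm_num)]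

lemma B_eq (p : ℕ) (k : ℤ) : B p k = A p k + k := by
  have h1 : 2 * B p k = 2 * A p k + 2 * k := by
    rw [A_two, B_two]; ring
  omega

lemma A_reflect (p : ℕ) (k : ℤ) : A p (-k - 1) = A p k + 2 * k + 1 := by
  have h1 := A_two p k
  have h2 : 2 * A p (-k - 1) = 2 * A p k + 2 * (2 * k + 1) := by
    rw [A_two, A_two]; ring
  omega

lemma A_nonneg (p : ℕ) (hp : 1 ≤ p) (k : ℤ) : 0 ≤ A p k := by
  have h1 := A_two p k
  have hkk : 0 ≤ k * (k + 1) := by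
    rcases le_or_gt 0 k with h | h
    · exact mul_nonneg h (by linarith)
    · have hkk2 : k * (k + 1) = (-k) * (-(k + 1)) := by ring
      rw [hkk2]
      exact mul_nonneg (by linarith) (by linarith)
  have hp' : (1 : ℤ) ≤ (p : ℤ) := by exact_mod_cast hp
  have h2 : 0 ≤ (2 * (p : ℤ) + 1) * k ^ 2 + (2 * (p : ℤ) - 1) * k := by
    nlinarith [mul_nonneg (by linarith : (0:ℤ) ≤ 2 * (p:ℤ) - 1) hkk, sq_nonneg k]
  omega

lemma B_nonneg (p : ℕ) (k : ℤ) : 0 ≤ B p k := by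
  have h1 := B_two p k
  have hkk : 0 ≤ k * (k + 1) := by
    rcases le_or_gt 0 k with h | h
    · exact mul_nonneg h (by linarith)
    · have hkk2 : k * (k + 1) = (-k) * (-(k + 1)) := by ring
      rw [hkk2]
      exact mul_nonneg (by linarith) (by linarith)
  have h2 : 0 ≤ (2 * (p : ℤ) + 1) * k ^ 2 + (2 * (p : ℤ) + 1) * k := by
    nlinarith [mul_nonneg (by positivity : (0:ℤ) ≤ 2 * (p:ℤ) + 1) hkk]
  omega

lemma zpow_add_nn (q : ℂ) {x y : ℤ} (hx : 0 ≤ x) (hy : 0 ≤ y) :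
    q ^ (x + y) = q ^ x * q ^ y := by
  lift x to ℕ using hx
  lift y to ℕ using hy
  rw [← Nat.cast_add, zpow_natCast, zpow_natCast, zpow_natCast, pow_add]

lemma qPoch_succ (q : ℂ) (m : ℕ) : qPoch q (m + 1) = qPoch q m * (1 - q ^ (m + 1)) :=
  Finset.prod_range_succ _ _

lemma one_sub_pow_ne (q : ℂ) (hq : ‖q‖ < 1) (m : ℕ) : (1 : ℂ) - q ^ (m + 1) ≠ 0 := by
  intro h
  have hqm : ‖q ^ (m + 1)‖ < 1 := by
    rw [norm_pow]
    exact pow_lt_one₀ (norm_nonneg q) hq (Nat.succ_ne_zero m)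
  have h1 : q ^ (m + 1) = 1 := by linear_combination -h
  rw [h1] at hqm
  simp at hqm

lemma qPoch_ne_zero (q : ℂ) (hq : ‖q‖ < 1) (m : ℕ) : qPoch q m ≠ 0 := by
  rw [qPoch]
  exact Finset.prod_ne_zero_iff.mpr fun j _ => one_sub_pow_ne q hq j

/-- The antisymmetric certificate. -/
noncomputable def G (q : ℂ) (p n : ℕ) (k : ℤ) : ℂ :=
  (-1 : ℂ) ^ k *
      (q ^ (A p k + (n : ℤ)) - q ^ (B p k) + q ^ (A p k + (n : ℤ) + 2 * k + 1)) /
    (qPoch q ((n : ℤ) - k).toNat * qPoch q ((n : ℤ) + k + 1).toNat)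

lemma neg_one_zpow_reflect (k : ℤ) : ((-1 : ℂ)) ^ (-k - 1) = -((-1 : ℂ)) ^ k := by
  have h0 : (-1 : ℂ) ≠ 0 := by norm_num
  have h : ((-1 : ℂ)) ^ (-k - 1) * ((-1 : ℂ)) ^ (k + 1) = 1 := by
    rw [← zpow_add₀ h0]; norm_num
  have h3 : ((-1 : ℂ)) ^ (k + 1) = -((-1 : ℂ)) ^ k := by
    rw [zpow_add₀ h0]; simp
  have hsq : ((-1 : ℂ)) ^ k * ((-1 : ℂ)) ^ k = 1 := by
    rw [← mul_zpow]; norm_num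
  rw [h3] at h
  linear_combination -((-1 : ℂ)) ^ (-k - 1) * hsq - ((-1 : ℂ)) ^ k * h

lemma G_reflect (q : ℂ) (p n : ℕ) (k : ℤ) : G q p n (-k - 1) = -G q p n k := by
  rw [G, G, neg_one_zpow_reflect,
    show A p (-k - 1) + (n : ℤ) = A p k + (n : ℤ) + 2 * k + 1 by
      rw [A_reflect]; ring,
    show B p (-k - 1) = B p k by
      have h1 := B_eq p (-k - 1); have h2 := B_eq p k; have h3 := A_reflect p k; omega,
    show A p k + (n : ℤ) + 2 * k + 1 + 2 * (-k - 1) + 1 = A p k + (n : ℤ) by ring,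
    show ((n : ℤ) - (-k - 1)) = (n : ℤ) + k + 1 by ring,
    show ((n : ℤ) + (-k - 1) + 1) = (n : ℤ) - k by ring]
  ring

theorem sum_G (q : ℂ) (p n : ℕ) :
    ∑ k ∈ Finset.Icc (-(n : ℤ) - 1) (n : ℤ), G q p n k = 0 := by
  refine Finset.sum_involution (fun k _ => -k - 1) ?_ ?_ ?_ ?_
  · intro k _
    rw [G_reflect]; ring
  · intro k _ _
    show -k - 1 ≠ k
    omega
  · intro k hk
    simp only [Finset.mem_Icc] at hk ⊢
    omega
  · intro k hk
    show -(-k - 1) - 1 = k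
    omega

end Aux2

theorem auxiliary2 (q : ℂ) (hq : ‖q‖ < 1) (p : ℕ) (hp : 1 ≤ p) (n : ℕ) :
    q ^ n * ∑ k ∈ Finset.Icc (-(n : ℤ) - 1) n,
        (-1 : ℂ) ^ k * q ^ (((2 * p + 1) * k ^ 2 + (2 * p - 1) * k) / 2) /
          (qPoch q ((n : ℤ) - k).toNat * qPoch q ((n : ℤ) + k + 1).toNat) =
      ∑ k ∈ Finset.Icc (-(n : ℤ)) n,
        (-1 : ℂ) ^ k * q ^ (((2 * p + 1) * k ^ 2 + (2 * p + 1) * k) / 2) /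
          (qPoch q ((n : ℤ) - k).toNat * qPoch q ((n : ℤ) + k).toNat) := by
  classical
  have hP := Aux2.qPoch_ne_zero q hq
  have h1E := Aux2.one_sub_pow_ne q hq
  -- pointwise identity on Icc (-n) n
  have main : ∀ k ∈ Finset.Icc (-(n : ℤ)) (n : ℤ),
      q ^ n * ((-1 : ℂ) ^ k * q ^ (((2 * (p : ℤ) + 1) * k ^ 2 + (2 * (p : ℤ) - 1) * k) / 2) /
          (qPoch q ((n : ℤ) - k).toNat * qPoch q ((n : ℤ) + k + 1).toNat))
        = Aux2.G q p n k +
          (-1 : ℂ) ^ k * q ^ (((2 * (p : ℤ) + 1) * k ^ 2 + (2 * (p : ℤ) + 1) * k) / 2) /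
          (qPoch q ((n : ℤ) - k).toNat * qPoch q ((n : ℤ) + k).toNat) := by
    intro k hk
    simp only [Finset.mem_Icc] at hk
    show q ^ n * ((-1 : ℂ) ^ k * q ^ (Aux2.A p k) /
          (qPoch q ((n : ℤ) - k).toNat * qPoch q ((n : ℤ) + k + 1).toNat))
        = Aux2.G q p n k + (-1 : ℂ) ^ k * q ^ (Aux2.B p k) /
          (qPoch q ((n : ℤ) - k).toNat * qPoch q ((n : ℤ) + k).toNat)
    have hA0 : 0 ≤ Aux2.A p k := Aux2.A_nonneg p hp k
    have hB0 : 0 ≤ Aux2.B p k := Aux2.B_nonneg p k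
    have htn : ((n : ℤ) + k + 1).toNat = ((n : ℤ) + k).toNat + 1 := by omega
    have hE : q ^ (((n : ℤ) + k).toNat + 1) = q ^ ((n : ℤ) + k + 1) := by
      rw [← zpow_natCast]; congr 1; push_cast; omega
    have hstep : qPoch q ((n : ℤ) + k + 1).toNat
        = qPoch q ((n : ℤ) + k).toNat * (1 - q ^ ((n : ℤ) + k + 1)) := by
      rw [htn, Aux2.qPoch_succ, hE]
    have ea : q ^ (Aux2.A p k + (n : ℤ)) = q ^ (Aux2.A p k) * q ^ n := by
      rw [Aux2.zpow_add_nn q hA0 (Int.natCast_nonneg n), zpow_natCast]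
    have ec : q ^ (Aux2.A p k + (n : ℤ) + 2 * k + 1)
        = q ^ (Aux2.B p k) * q ^ ((n : ℤ) + k + 1) := by
      have h : Aux2.A p k + (n : ℤ) + 2 * k + 1 = Aux2.B p k + ((n : ℤ) + k + 1) := by
        have := Aux2.B_eq p k; omega
      rw [h, Aux2.zpow_add_nn q hB0 (by omega)]
    have hne1 : (1 : ℂ) - q ^ ((n : ℤ) + k + 1) ≠ 0 := by rw [← hE]; exact h1E _
    have hPa := hP ((n : ℤ) - k).toNat
    have hPb := hP ((n : ℤ) + k).toNat
    rw [Aux2.G, hstep, ea, ec]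
    field_simp
    ring
  have edge :
      q ^ n * ((-1 : ℂ) ^ (-(n : ℤ) - 1) *
          q ^ (((2 * (p : ℤ) + 1) * (-(n : ℤ) - 1) ^ 2 + (2 * (p : ℤ) - 1) * (-(n : ℤ) - 1)) / 2) /
          (qPoch q ((n : ℤ) - (-(n : ℤ) - 1)).toNat *
            qPoch q ((n : ℤ) + (-(n : ℤ) - 1) + 1).toNat))
        = Aux2.G q p n (-(n : ℤ) - 1) := by
    have hA0 : 0 ≤ Aux2.A p (-(n : ℤ) - 1) := Aux2.A_nonneg p hp _
    have ea : q ^ (Aux2.A p (-(n : ℤ) - 1) + (n : ℤ))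
        = q ^ (Aux2.A p (-(n : ℤ) - 1)) * q ^ n := by
      rw [Aux2.zpow_add_nn q hA0 (Int.natCast_nonneg n), zpow_natCast]
    have hBe : Aux2.B p (-(n : ℤ) - 1)
        = Aux2.A p (-(n : ℤ) - 1) + (n : ℤ) + 2 * (-(n : ℤ) - 1) + 1 := by
      have := Aux2.B_eq p (-(n : ℤ) - 1); omega
    show q ^ n * ((-1 : ℂ) ^ (-(n : ℤ) - 1) * q ^ (Aux2.A p (-(n : ℤ) - 1)) /
          (qPoch q ((n : ℤ) - (-(n : ℤ) - 1)).toNat *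
            qPoch q ((n : ℤ) + (-(n : ℤ) - 1) + 1).toNat))
        = Aux2.G q p n (-(n : ℤ) - 1)
    rw [Aux2.G, hBe, ea]
    ring
  have hsplit : Finset.Icc (-(n : ℤ) - 1) (n : ℤ)
      = insert (-(n : ℤ) - 1) (Finset.Icc (-(n : ℤ)) (n : ℤ)) := by
    ext x
    simp only [Finset.mem_Icc, Finset.mem_insert]
    omega
  have hnot : (-(n : ℤ) - 1) ∉ Finset.Icc (-(n : ℤ)) (n : ℤ) := by
    simp only [Finset.mem_Icc]
    omega
  have hzero := Aux2.sum_G q p n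
  rw [hsplit, Finset.sum_insert hnot] at hzero
  rw [hsplit, Finset.sum_insert hnot, mul_add, Finset.mul_sum, edge,
    Finset.sum_congr rfl main, Finset.sum_add_distrib]
  linear_combination hzero
end
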